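/- Let C ⊆ ℝⁿ be a nonempty compact convex set and K = cone({1} × C) ⊆ ℝ^{n+1}. For every face F_C of C, the set cone({1} × F_C) is a face of K. -/

import Mathlib

open Pointwise RealInnerProductSpace

/-- The conic hull: all nonnegative multiples of elements of `S`. -/
def coneHull {E : Type*} [AddCommMonoid E] [Module ℝ E] (S : Set E) : Set E :=
  {y | ∃ c : ℝ, 0 ≤ c ∧ ∃ x ∈ S, y = c • x}

/-- The set `{1} × C ⊆ ℝ^{n+1}`. -/
def lift1 {n : ℕ} (C : Set (EuclideanSpace ℝ (Fin n))) :
    Set (EuclideanSpace ℝ (Fin (n + 1))) :=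
  {z | ∃ x ∈ C, z = (WithLp.equiv 2 (Fin (n + 1) → ℝ)).symm (Fin.cons 1 x)}

/-- `F` is a face of the convex set `C`: a nonempty convex subset such that
`α • x + (1 - α) • y ∈ F` with `x, y ∈ C` and `α ∈ (0,1)` implies `x, y ∈ F`. -/
def IsFaceOfSet {E : Type*} [AddCommGroup E] [Module ℝ E] (C F : Set E) : Prop :=
  F.Nonempty ∧ F ⊆ C ∧ Convex ℝ F ∧
    ∀ x ∈ C, ∀ y ∈ C, ∀ α : ℝ, α ∈ Set.Ioo (0 : ℝ) 1 →
      α • x + (1 - α) • y ∈ F → x ∈ F ∧ y ∈ F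

/-- `F` is a face of the cone `K`: a nonempty convex subset such that
`x + y ∈ F` with `x, y ∈ K` implies `x, y ∈ F`. -/
def IsFaceOfCone {E : Type*} [AddCommGroup E] [Module ℝ E] (K F : Set E) : Prop :=
  F.Nonempty ∧ F ⊆ K ∧ Convex ℝ F ∧
    ∀ x y, x ∈ K → y ∈ K → x + y ∈ F → x ∈ F ∧ y ∈ F

noncomputable def emb1 {n : ℕ} (x : EuclideanSpace ℝ (Fin n)) :
    EuclideanSpace ℝ (Fin (n + 1)) :=
  (WithLp.equiv 2 (Fin (n + 1) → ℝ)).symm (Fin.cons 1 x)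

lemma decomp1 {n : ℕ} {a b c : ℝ} {p q r : EuclideanSpace ℝ (Fin n)}
    (h : a • emb1 p + b • emb1 q = c • emb1 r) :
    a + b = c ∧ a • p + b • q = c • r := by
  have h' : ∀ i, (a • emb1 p + b • emb1 q) i = (c • emb1 r) i := fun i => by rw [h]
  simp only [PiLp.add_apply, PiLp.smul_apply, emb1, WithLp.equiv_symm_apply, WithLp.ofLp_toLp,
    smul_eq_mul] at h'
  constructor
  · have := h' 0
    simpa using this
  · ext i
    have := h' i.succ
    simpa [PiLp.add_apply, PiLp.smul_apply] using this

lemma comb1 {n : ℕ} {a b c : ℝ} (hc : c ≠ 0) (p q : EuclideanSpace ℝ (Fin n))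
    (habc : a + b = c) :
    a • emb1 p + b • emb1 q = c • emb1 ((a/c) • p + (b/c) • q) := by
  ext i
  simp only [PiLp.add_apply, PiLp.smul_apply, emb1, WithLp.equiv_symm_apply, WithLp.ofLp_toLp, smul_eq_mul]
  refine Fin.cases ?_ (fun j => ?_) i
  · simp [Fin.cons_zero, ← habc]
  · simp only [Fin.cons_succ, PiLp.add_apply, PiLp.smul_apply, smul_eq_mul]
    field_simp

lemma mem_cone1 {n : ℕ} {S : Set (EuclideanSpace ℝ (Fin n))} {f : EuclideanSpace ℝ (Fin n)}
    {c : ℝ} (hc : 0 ≤ c) (hf : f ∈ S) : c • emb1 f ∈ coneHull (lift1 S) :=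
  ⟨c, hc, emb1 f, ⟨f, hf, rfl⟩, rfl⟩

lemma add_mem_cone1 {n : ℕ} {S : Set (EuclideanSpace ℝ (Fin n))} (hS : Convex ℝ S)
    {a b : ℝ} (ha : 0 ≤ a) (hb : 0 ≤ b) {p q : EuclideanSpace ℝ (Fin n)}
    (hp : p ∈ S) (hq : q ∈ S) :
    a • emb1 p + b • emb1 q ∈ coneHull (lift1 S) := by
  rcases eq_or_lt_of_le (by positivity : (0:ℝ) ≤ a + b) with h | h
  · have ha0 : a = 0 := by linarith
    have hb0 : b = 0 := by linarith
    rw [ha0, hb0]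
    simpa using mem_cone1 (le_refl (0:ℝ)) hp
  · have hc : a + b ≠ 0 := ne_of_gt h
    rw [comb1 hc p q rfl]
    exact mem_cone1 (le_of_lt h)
      (hS hp hq (by positivity) (by positivity) (by field_simp))

theorem stmt_5 (n : ℕ) (C : Set (EuclideanSpace ℝ (Fin n))) (hne : C.Nonempty)
    (hcomp : IsCompact C) (hconv : Convex ℝ C)
    (FC : Set (EuclideanSpace ℝ (Fin n))) (hFC : IsFaceOfSet C FC) :
    IsFaceOfCone (coneHull (lift1 C)) (coneHull (lift1 FC)) := by
  obtain ⟨⟨f₀, hf₀⟩, hsub, hcvx, hface⟩ := hFC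
  refine ⟨⟨emb1 f₀, by simpa using mem_cone1 (zero_le_one) hf₀⟩, ?_, ?_, ?_⟩
  · rintro z ⟨c, hc, w, ⟨x, hx, rfl⟩, rfl⟩
    exact mem_cone1 hc (hsub hx)
  · rintro z ⟨a, ha, w, ⟨p, hp, rfl⟩, rfl⟩ z' ⟨b, hb, w', ⟨q, hq, rfl⟩, rfl⟩ s t hs ht hst
    rw [smul_smul, smul_smul]
    exact add_mem_cone1 hcvx (by positivity) (by positivity) hp hq
  · rintro z z' ⟨a, ha, w, ⟨p, hp, rfl⟩, rfl⟩ ⟨b, hb, w', ⟨q, hq, rfl⟩, rfl⟩ hsum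
    obtain ⟨c, hc, w'', ⟨r, hr, rfl⟩, heq⟩ := hsum
    obtain ⟨habc, hvec⟩ := decomp1 heq
    have hzero : (0 : EuclideanSpace ℝ (Fin (n+1))) ∈ coneHull (lift1 FC) := by
      simpa using mem_cone1 (le_refl (0:ℝ)) hr
    rcases eq_or_lt_of_le hc with hc0 | hcpos
    · have ha0 : a = 0 := by linarith
      have hb0 : b = 0 := by linarith
      rw [ha0, hb0]
      exact ⟨by simpa using hzero, by simpa using hzero⟩
    · rcases eq_or_lt_of_le ha with ha0 | hapos
      · have hbc : b = c := by linarith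
        have hq_eq : q = r := by
          have h1 : b • q = c • r := by
            rw [← hvec, ← ha0]; simp
          rw [hbc] at h1
          exact smul_right_injective _ (ne_of_gt hcpos) h1
        constructor
        · rw [← ha0]; simpa using hzero
        · rw [hq_eq]; exact mem_cone1 hb hr
      · rcases eq_or_lt_of_le hb with hb0 | hbpos
        · have hac : a = c := by linarith
          have hp_eq : p = r := by
            have h1 : a • p = c • r := by
              rw [← hvec, ← hb0]; simp
            rw [hac] at h1
            exact smul_right_injective _ (ne_of_gt hcpos) h1
          constructor
          · rw [hp_eq]; exact mem_cone1 ha hr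
          · rw [← hb0]; simpa using hzero
        · set α : ℝ := a / c with hα
          have hαmem : α ∈ Set.Ioo (0:ℝ) 1 := by
            constructor
            · positivity
            · rw [hα, div_lt_one hcpos]; linarith
          have hkey : α • p + (1 - α) • q = r := by
            have h1 : (1 : ℝ) - α = b / c := by
              rw [hα]; field_simp; linarith
            rw [h1, hα, div_eq_mul_inv, div_eq_mul_inv, mul_comm a, mul_comm b,
              mul_smul, mul_smul, ← smul_add, hvec, smul_smul,
              inv_mul_cancel₀ (ne_of_gt hcpos), one_smul]
          obtain ⟨hpF, hqF⟩ := hface p hp q hq α hαmem (hkey ▸ hr)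
          exact ⟨mem_cone1 ha hpF, mem_cone1 hb hqF⟩
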